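/- Let S be a commutative monoid written additively, let n ≥ 1, and let P : S → ℝ be a function. If MP and MP′ are both n-polarizations of P, then MP = MP′. -/

import Mathlib

/-- Alternating sum of `(-1)^|T|` over all supersets `T` of `B` in `Fin n`. -/
lemma altsum_superset {n : ℕ} (B : Finset (Fin n)) :
    ∑ T ∈ Finset.univ.powerset.filter (fun T => B ⊆ T), (-1:ℝ)^T.card
      = if B = Finset.univ then (-1:ℝ)^n else 0 := by
  rw [show Finset.univ.powerset.filter (fun T => B ⊆ T)
      = Bᶜ.powerset.image (fun C => B ∪ C) from ?_]
  · rw [Finset.sum_image ?inj]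
    case inj =>
      intro C hC C' hC' hE
      simp only [Finset.mem_coe, Finset.mem_powerset] at hC hC' hE
      have h1 : ∀ x ∈ C, x ∈ C' := by
        intro x hx
        have hxB : x ∉ B := by
          have := hC hx; simp only [Finset.mem_compl] at this; exact this
        have : x ∈ B ∪ C' := hE ▸ (Finset.mem_union_right _ hx)
        simpa [hxB] using this
      have h2 : ∀ x ∈ C', x ∈ C := by
        intro x hx
        have hxB : x ∉ B := by
          have := hC' hx; simp only [Finset.mem_compl] at this; exact this
        have : x ∈ B ∪ C := hE ▸ (Finset.mem_union_right _ hx)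
        simpa [hxB] using this
      exact Finset.Subset.antisymm h1 h2
    have hcard : ∀ C ∈ Bᶜ.powerset, ((B ∪ C).card : ℕ) = B.card + C.card := by
      intro C hC
      simp only [Finset.mem_powerset] at hC
      rw [Finset.card_union_of_disjoint]
      exact Finset.disjoint_left.mpr fun x hxB hxC =>
        (Finset.mem_compl.mp (hC hxC)) hxB
    calc ∑ C ∈ Bᶜ.powerset, (-1:ℝ)^(B ∪ C).card
        = ∑ C ∈ Bᶜ.powerset, (-1:ℝ)^B.card * (-1:ℝ)^C.card := by
          refine Finset.sum_congr rfl fun C hC => ?_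
          rw [hcard C hC, pow_add]
      _ = (-1:ℝ)^B.card * ∑ C ∈ Bᶜ.powerset, (-1:ℝ)^C.card := by rw [Finset.mul_sum]
      _ = if B = Finset.univ then (-1:ℝ)^n else 0 := by
          have hz := Finset.sum_powerset_neg_one_pow_card (x := Bᶜ)
          have hcast : ∑ C ∈ Bᶜ.powerset, (-1:ℝ)^C.card
              = ((∑ C ∈ Bᶜ.powerset, (-1:ℤ)^C.card : ℤ) : ℝ) := by push_cast; rfl
          rw [hcast, hz]
          by_cases hB : B = Finset.univ
          · simp [hB, Finset.compl_univ]
          · have : Bᶜ ≠ ∅ := by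
              intro hc
              exact hB (by simpa [Finset.compl_eq_empty_iff] using hc)
            simp [hB, this]
  · ext T
    simp only [Finset.mem_filter, Finset.mem_powerset, Finset.mem_image]
    constructor
    · rintro ⟨-, hBT⟩
      exact ⟨T \ B, (fun x hx => Finset.mem_compl.mpr (Finset.mem_sdiff.mp hx).2),
        by rw [Finset.union_sdiff_of_subset hBT]⟩
    · rintro ⟨C, hC, rfl⟩
      exact ⟨Finset.subset_univ _, Finset.subset_union_left⟩

/-- An *`n`-polarization* of a function `P : S → ℝ` on a commutative monoid `S` is
a function `MP : Sⁿ → ℝ` that agrees with `P` on the diagonal, is symmetric under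
permutations of its arguments, and is additive in each argument. -/
def IsPolarization {S : Type*} [AddCommMonoid S] (n : ℕ) (P : S → ℝ)
    (MP : (Fin n → S) → ℝ) : Prop :=
  (∀ a : S, MP (fun _ => a) = P a) ∧
  (∀ (σ : Equiv.Perm (Fin n)) (a : Fin n → S), MP (a ∘ σ) = MP a) ∧
  (∀ (a : Fin n → S) (i : Fin n) (x y : S),
    MP (Function.update a i (x + y)) =
      MP (Function.update a i x) + MP (Function.update a i y))

/-- An `n`-polarization of a function `P : S → ℝ`, when it exists, is unique. -/
theorem polarization_unique {S : Type*} [AddCommMonoid S] (n : ℕ) (hn : 1 ≤ n)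
    (P : S → ℝ) (MP MP' : (Fin n → S) → ℝ)
    (h : IsPolarization n P MP) (h' : IsPolarization n P MP') : MP = MP' := by
  obtain ⟨hd, hs, ha⟩ := h
  obtain ⟨hd', hs', ha'⟩ := h'
  funext a
  have Dadd : ∀ (m : Fin n → S) (i : Fin n) (x y : S),
      MP (Function.update m i (x + y)) - MP' (Function.update m i (x + y)) =
        (MP (Function.update m i x) - MP' (Function.update m i x)) +
        (MP (Function.update m i y) - MP' (Function.update m i y)) := by
    intro m i x y
    rw [ha, ha']; ring
  have Dzero : ∀ (m : Fin n → S) (i : Fin n),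
      MP (Function.update m i (0:S)) - MP' (Function.update m i (0:S)) = 0 := by
    intro m i
    have := Dadd m i 0 0
    rw [add_zero] at this
    linarith
  let L : MultilinearMap ℕ (fun _ : Fin n => S) ℝ :=
    { toFun := fun x => MP x - MP' x
      map_update_add' := by
        intro dec m i x y
        have hdec : dec = instDecidableEqFin n := Subsingleton.elim _ _
        subst hdec
        exact Dadd m i x y
      map_update_smul' := by
        intro dec m i c x
        have hdec : dec = instDecidableEqFin n := Subsingleton.elim _ _
        subst hdec
        induction c with
        | zero => simpa using Dzero m i
        | succ k ih =>
          rw [succ_nsmul, Dadd, ih, succ_nsmul] }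
  have hL : ∀ x, L x = MP x - MP' x := fun x => rfl
  -- L vanishes on diagonals of partial sums
  have hLdiag : ∀ T : Finset (Fin n), L (fun _ => ∑ j ∈ T, a j) = 0 := by
    intro T
    rw [hL, hd, hd', sub_self]
  -- expansion by multilinearity
  have hexp : ∀ T : Finset (Fin n),
      (0:ℝ) = ∑ r ∈ Fintype.piFinset (fun _ : Fin n => T), L (fun i => a (r i)) := by
    intro T
    rw [← L.map_sum_finset (fun _ j => a j) (fun _ => T)]
    exact (hLdiag T).symm
  have hpi : ∀ T : Finset (Fin n), Fintype.piFinset (fun _ : Fin n => T) =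
      Finset.univ.filter (fun r : Fin n → Fin n => ∀ i, r i ∈ T) := by
    intro T; ext r; simp [Fintype.mem_piFinset]
  have key : (0:ℝ) = ∑ T ∈ (Finset.univ : Finset (Fin n)).powerset,
      (-1:ℝ)^T.card * ∑ r ∈ Fintype.piFinset (fun _ : Fin n => T),
        L (fun i => a (r i)) := by
    rw [Finset.sum_congr rfl (fun T _ => by rw [← hexp T, mul_zero]),
      Finset.sum_const, smul_zero]
  -- swap sums
  have key2 : (0:ℝ) = ∑ r : Fin n → Fin n,
      (∑ T ∈ Finset.univ.powerset.filter
          (fun T => Finset.image r Finset.univ ⊆ T), (-1:ℝ)^T.card)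
        * L (fun i => a (r i)) := by
    rw [key]
    have : ∀ T : Finset (Fin n),
        (-1:ℝ)^T.card * ∑ r ∈ Fintype.piFinset (fun _ : Fin n => T),
            L (fun i => a (r i))
          = ∑ r : Fin n → Fin n,
            (if Finset.image r Finset.univ ⊆ T then (-1:ℝ)^T.card * L (fun i => a (r i))
             else 0) := by
      intro T
      rw [hpi T, Finset.mul_sum, Finset.sum_filter]
      refine Finset.sum_congr rfl fun r _ => ?_
      by_cases hr : ∀ i, r i ∈ T
      · have hr' : Finset.image r Finset.univ ⊆ T := by
          intro x hx
          obtain ⟨i, -, rfl⟩ := Finset.mem_image.mp hx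
          exact hr i
        simp [hr, hr']
      · have hr' : ¬ Finset.image r Finset.univ ⊆ T := by
          intro hc
          exact hr fun i => hc (Finset.mem_image.mpr ⟨i, Finset.mem_univ i, rfl⟩)
        simp [hr, hr']
    rw [Finset.sum_congr rfl fun T _ => this T, Finset.sum_comm]
    refine Finset.sum_congr rfl fun r _ => ?_
    rw [Finset.sum_mul, Finset.sum_filter]
  -- evaluate inner sums via the alternating-sum lemma
  have key3 : (0:ℝ) = ∑ r : Fin n → Fin n,
      (if Finset.image r Finset.univ = Finset.univ then (-1:ℝ)^n else 0)
        * L (fun i => a (r i)) := by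
    refine key2.trans (Finset.sum_congr rfl fun r _ => ?_)
    rw [altsum_superset]
  -- surjective maps Fin n → Fin n are bijections, and L is symmetric
  have hsym : ∀ r : Fin n → Fin n, Finset.image r Finset.univ = Finset.univ →
      L (fun i => a (r i)) = L a := by
    intro r hr
    have hsurj : Function.Surjective r := by
      intro x
      have : x ∈ Finset.image r Finset.univ := hr.symm ▸ Finset.mem_univ x
      obtain ⟨i, -, hi⟩ := Finset.mem_image.mp this
      exact ⟨i, hi⟩
    have hbij : Function.Bijective r := Finite.surjective_iff_bijective.mp hsurj
    have : (fun i => a (r i)) = a ∘ (Equiv.ofBijective r hbij) := rfl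
    rw [hL, hL, this, hs, hs']
  have key4 : (0:ℝ) = ((Finset.univ.filter
      (fun r : Fin n → Fin n => Finset.image r Finset.univ = Finset.univ)).card : ℝ)
        * ((-1:ℝ)^n * L a) := by
    refine key3.trans ?_
    calc ∑ r : Fin n → Fin n,
          (if Finset.image r Finset.univ = Finset.univ then (-1:ℝ)^n else 0)
            * L (fun i => a (r i))
        = ∑ r : Fin n → Fin n,
          (if Finset.image r Finset.univ = Finset.univ
            then (-1:ℝ)^n * L (fun i => a (r i)) else 0) := by
          refine Finset.sum_congr rfl fun r _ => ?_
          by_cases hc : Finset.image r Finset.univ = Finset.univ <;> simp [hc]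
      _ = ∑ r ∈ Finset.univ.filter
            (fun s : Fin n → Fin n => Finset.image s Finset.univ = Finset.univ),
          (-1:ℝ)^n * L (fun i => a (r i)) := (Finset.sum_filter _ _).symm
      _ = ∑ r ∈ Finset.univ.filter
            (fun s : Fin n → Fin n => Finset.image s Finset.univ = Finset.univ),
          (-1:ℝ)^n * L a := by
          refine Finset.sum_congr rfl fun r hr => ?_
          rw [hsym r (Finset.mem_filter.mp hr).2]
      _ = _ := by rw [Finset.sum_const, nsmul_eq_mul]
  have hcardpos : 0 < (Finset.univ.filter
      (fun r : Fin n → Fin n => Finset.image r Finset.univ = Finset.univ)).card := by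
    refine Finset.card_pos.mpr ⟨id, Finset.mem_filter.mpr ⟨Finset.mem_univ _, ?_⟩⟩
    simp
  have hLa : L a = 0 := by
    have hne : ((Finset.univ.filter
        (fun r : Fin n → Fin n => Finset.image r Finset.univ = Finset.univ)).card : ℝ)
          * (-1:ℝ)^n ≠ 0 := by
      apply mul_ne_zero
      · exact_mod_cast hcardpos.ne'
      · exact pow_ne_zero _ (by norm_num)
    have := key4.symm
    rw [← mul_assoc] at this
    exact (mul_eq_zero.mp this).resolve_left hne
  have := hL a
  rw [hLa] at this
  linarith [this]
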